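/- For the nonuniform three-point second-difference formula on a grid generated as the image of a uniform grid under a smooth map, the local truncation error in approximating u'' is O(h²), where h is the maximal local step size. -/

import Mathlib

open Set

private lemma iterW_eq {f : ℝ → ℝ} {s : Set ℝ} (hs : UniqueDiffOn ℝ s) {m : ℕ}
    (hf : ContDiff ℝ (m : ℕ∞) f) : ∀ n ≤ m, ∀ x ∈ s, iteratedDerivWithin n f s x = iteratedDeriv n f x := by
  intro n
  induction n with
  | zero => intro _ x hx; simp
  | succ n IH =>
    intro hn x hx
    have hlt : n < m := Nat.lt_of_succ_le hn
    have h1 : Set.EqOn (iteratedDerivWithin n f s) (iteratedDeriv n f) s :=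
      fun y hy => IH hlt.le y hy
    rw [iteratedDerivWithin_succ, derivWithin_congr h1 (h1 hx), iteratedDeriv_succ]
    exact DifferentiableAt.derivWithin
      ((hf.differentiable_iteratedDeriv n (by exact_mod_cast hlt)) x) (hs x hx)

private lemma taylor4R {u : ℝ → ℝ} (hu : ContDiff ℝ 4 u) {a b : ℝ} (hab : a < b) :
    ∃ ξ ∈ Ioo a b, u b = u a + deriv u a * (b - a) + iteratedDeriv 2 u a * (b - a) ^ 2 / 2
      + iteratedDeriv 3 u a * (b - a) ^ 3 / 6 + iteratedDeriv 4 u ξ * (b - a) ^ 4 / 24 := by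
  have hud : UniqueDiffOn ℝ (Icc a b) := uniqueDiffOn_Icc hab
  have hu4 : ContDiff ℝ ((4 : ℕ) : ℕ∞) u := by exact_mod_cast hu
  have hcd : ContDiffOn ℝ 3 u (Icc a b) := (hu.of_le (by norm_num)).contDiffOn
  have heq := iterW_eq hud hu4
  have ha : a ∈ Icc a b := left_mem_Icc.2 hab.le
  have hdiff : DifferentiableOn ℝ (iteratedDerivWithin 3 u (Icc a b)) (Ioo a b) := by
    apply DifferentiableOn.congr
      ((hu4.differentiable_iteratedDeriv 3 (by norm_num)).differentiableOn)
    intro y hy; exact heq 3 (by norm_num) y (Ioo_subset_Icc_self hy)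
  obtain ⟨ξ, hξ, hval⟩ := taylor_mean_remainder_lagrange (n := 3) hab.ne
    (by rwa [uIcc_of_le hab.le]) (by rwa [uIcc_of_le hab.le, uIoo_of_le hab.le])
  rw [uIoo_of_le hab.le] at hξ
  rw [uIcc_of_le hab.le] at hval
  refine ⟨ξ, hξ, ?_⟩
  rw [taylor_within_apply] at hval
  simp only [Finset.sum_range_succ, Finset.sum_range_zero, smul_eq_mul] at hval
  rw [heq 0 (by norm_num) a ha, heq 1 (by norm_num) a ha, heq 2 (by norm_num) a ha,
    heq 3 (by norm_num) a ha, heq 4 le_rfl ξ (Ioo_subset_Icc_self hξ)] at hval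
  simp only [iteratedDeriv_zero, iteratedDeriv_one] at hval
  norm_num [Nat.factorial] at hval
  linarith

private lemma iter_reflect (n : ℕ) (f : ℝ → ℝ) (c x : ℝ) :
    iteratedDeriv n (fun y => f (c - y)) x = (-1 : ℝ) ^ n * iteratedDeriv n f (c - x) := by
  have h1 : (fun y : ℝ => f (c - y)) = (fun z : ℝ => f (c + z)) ∘ (fun y : ℝ => -y) := by
    funext y; simp [sub_eq_add_neg]
  have h2 : (fun y : ℝ => f (c - y)) = (fun y : ℝ => (fun z : ℝ => f (c + z)) (-y)) := by
    funext y; simp [sub_eq_add_neg]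
  rw [h2, iteratedDeriv_comp_neg n (fun z => f (c + z)) x, iteratedDeriv_comp_const_add n f c]
  simp [sub_eq_add_neg, smul_eq_mul]

private lemma taylor4L {u : ℝ → ℝ} (hu : ContDiff ℝ 4 u) {a b : ℝ} (hab : a < b) :
    ∃ ξ ∈ Ioo a b, u a = u b - deriv u b * (b - a) + iteratedDeriv 2 u b * (b - a) ^ 2 / 2
      - iteratedDeriv 3 u b * (b - a) ^ 3 / 6 + iteratedDeriv 4 u ξ * (b - a) ^ 4 / 24 := by
  set v : ℝ → ℝ := fun y => u (a + b - y) with hv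
  have hvc : ContDiff ℝ 4 v := by
    have : ContDiff ℝ 4 (fun y : ℝ => a + b - y) := (contDiff_const.sub contDiff_id)
    exact hu.comp this
  obtain ⟨ξ, hξ, hval⟩ := taylor4R hvc hab
  refine ⟨a + b - ξ, ⟨by cases hξ with | intro h1 h2 => linarith,
    by cases hξ with | intro h1 h2 => linarith⟩, ?_⟩
  have hr : ∀ n x, iteratedDeriv n v x = (-1 : ℝ) ^ n * iteratedDeriv n u (a + b - x) :=
    fun n x => iter_reflect n u (a + b) x
  have h0 : v b = u a := by simp [hv]
  have h0' : v a = u b := by simp [hv]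
  have h1 : deriv v a = -deriv u b := by
    have h := hr 1 a
    simp only [iteratedDeriv_one] at h
    rw [h]; norm_num [show a + b - a = b by ring]
  have h2 : iteratedDeriv 2 v a = iteratedDeriv 2 u b := by
    rw [hr 2 a]; norm_num [show a + b - a = b by ring]
  have h3 : iteratedDeriv 3 v a = -iteratedDeriv 3 u b := by
    rw [hr 3 a]; norm_num [show a + b - a = b by ring]
  have h4 : iteratedDeriv 4 v ξ = iteratedDeriv 4 u (a + b - ξ) := by
    rw [hr 4 ξ]; norm_num
  rw [h0, h0', h1, h2, h3, h4] at hval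
  linarith

private lemma taylor2R {g : ℝ → ℝ} (hg : ContDiff ℝ 2 g) {a b : ℝ} (hab : a < b) :
    ∃ ξ ∈ Ioo a b, g b = g a + deriv g a * (b - a) + iteratedDeriv 2 g ξ * (b - a) ^ 2 / 2 := by
  have hud : UniqueDiffOn ℝ (Icc a b) := uniqueDiffOn_Icc hab
  have hg2 : ContDiff ℝ ((2 : ℕ) : ℕ∞) g := by exact_mod_cast hg
  have hcd : ContDiffOn ℝ 1 g (Icc a b) := (hg.of_le (by norm_num)).contDiffOn
  have heq := iterW_eq hud hg2
  have ha : a ∈ Icc a b := left_mem_Icc.2 hab.le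
  have hdiff : DifferentiableOn ℝ (iteratedDerivWithin 1 g (Icc a b)) (Ioo a b) := by
    apply DifferentiableOn.congr
      ((hg2.differentiable_iteratedDeriv 1 (by norm_num)).differentiableOn)
    intro y hy; exact heq 1 (by norm_num) y (Ioo_subset_Icc_self hy)
  obtain ⟨ξ, hξ, hval⟩ := taylor_mean_remainder_lagrange (n := 1) hab.ne
    (by rwa [uIcc_of_le hab.le]) (by rwa [uIcc_of_le hab.le, uIoo_of_le hab.le])
  rw [uIoo_of_le hab.le] at hξ
  rw [uIcc_of_le hab.le] at hval
  refine ⟨ξ, hξ, ?_⟩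
  rw [taylor_within_apply] at hval
  simp only [Finset.sum_range_succ, Finset.sum_range_zero, smul_eq_mul] at hval
  rw [heq 0 (by norm_num) a ha, heq 1 (by norm_num) a ha,
    heq 2 le_rfl ξ (Ioo_subset_Icc_self hξ)] at hval
  simp only [iteratedDeriv_zero, iteratedDeriv_one] at hval
  norm_num [Nat.factorial] at hval
  linarith

private lemma taylor2L {g : ℝ → ℝ} (hg : ContDiff ℝ 2 g) {a b : ℝ} (hab : a < b) :
    ∃ ξ ∈ Ioo a b, g a = g b - deriv g b * (b - a) + iteratedDeriv 2 g ξ * (b - a) ^ 2 / 2 := by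
  set v : ℝ → ℝ := fun y => g (a + b - y) with hv
  have hvc : ContDiff ℝ 2 v := hg.comp (contDiff_const.sub contDiff_id)
  obtain ⟨ξ, hξ, hval⟩ := taylor2R hvc hab
  refine ⟨a + b - ξ, ⟨by cases hξ with | intro h1 h2 => linarith,
    by cases hξ with | intro h1 h2 => linarith⟩, ?_⟩
  have hr : ∀ n x, iteratedDeriv n v x = (-1 : ℝ) ^ n * iteratedDeriv n g (a + b - x) :=
    fun n x => iter_reflect n g (a + b) x
  have h0 : v b = g a := by simp [hv]
  have h0' : v a = g b := by simp [hv]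
  have h1 : deriv v a = -deriv g b := by
    have h := hr 1 a
    simp only [iteratedDeriv_one] at h
    rw [h]; norm_num [show a + b - a = b by ring]
  have h2 : iteratedDeriv 2 v ξ = iteratedDeriv 2 g (a + b - ξ) := by
    rw [hr 2 ξ]; norm_num
  rw [h0, h0', h1, h2] at hval
  linarith

set_option maxHeartbeats 2000000 in
theorem stmt_12 (g : ℝ → ℝ) (hg : ContDiff ℝ 3 g) (δ : ℝ) (hδ : 0 < δ)
    (hg' : ∀ x ∈ Set.Icc (-1 : ℝ) 1, δ ≤ deriv g x)
    (u : ℝ → ℝ) (hu : ContDiff ℝ 4 u) :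
    ∃ C > 0, ∀ N : ℕ, ∀ i : ℕ, 1 ≤ i → i ≤ N →
      (fun k : ℝ =>
        (fun x : ℕ → ℝ =>
          (fun h : ℕ → ℝ =>
            |iteratedDeriv 2 u (x i) -
              (2 * u (x (i - 1)) / (h (i - 1) * (h (i - 1) + h i)) -
                2 * u (x i) / (h (i - 1) * h i) +
                2 * u (x (i + 1)) / (h i * (h (i - 1) + h i)))| ≤
              C * max (h (i - 1)) (h i) ^ 2)
          (fun j => x (j + 1) - x j))
        (fun j : ℕ => g (-1 + j * k)))
      (2 / ((N : ℝ) + 1)) := by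
  have hgd : Differentiable ℝ g := hg.differentiable (by norm_num)
  have hg2 : ContDiff ℝ 2 g := hg.of_le (by norm_num)
  have hmono : StrictMonoOn g (Icc (-1 : ℝ) 1) := by
    apply strictMonoOn_of_deriv_pos (convex_Icc _ _) hgd.continuous.continuousOn
    intro x hx
    exact lt_of_lt_of_le hδ (hg' x (interior_subset hx))
  obtain ⟨B2, hB2⟩ : ∃ B, ∀ y ∈ Icc (-1 : ℝ) 1, |iteratedDeriv 2 g y| ≤ B := by
    obtain ⟨B, hB⟩ := (isCompact_Icc (a := (-1 : ℝ)) (b := 1)).exists_bound_of_continuousOn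
      ((hg.continuous_iteratedDeriv 2 (by norm_num)).continuousOn)
    exact ⟨B, fun y hy => by simpa [Real.norm_eq_abs] using hB y hy⟩
  obtain ⟨B3, hB3⟩ : ∃ B, ∀ y ∈ Icc (g (-1 : ℝ)) (g 1), |iteratedDeriv 3 u y| ≤ B := by
    obtain ⟨B, hB⟩ := (isCompact_Icc (a := g (-1 : ℝ)) (b := g 1)).exists_bound_of_continuousOn
      ((hu.continuous_iteratedDeriv 3 (by norm_num)).continuousOn)
    exact ⟨B, fun y hy => by simpa [Real.norm_eq_abs] using hB y hy⟩
  obtain ⟨B4, hB4⟩ : ∃ B, ∀ y ∈ Icc (g (-1 : ℝ)) (g 1), |iteratedDeriv 4 u y| ≤ B := by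
    obtain ⟨B, hB⟩ := (isCompact_Icc (a := g (-1 : ℝ)) (b := g 1)).exists_bound_of_continuousOn
      ((hu.continuous_iteratedDeriv 4 (by norm_num)).continuousOn)
    exact ⟨B, fun y hy => by simpa [Real.norm_eq_abs] using hB y hy⟩
  set B2' : ℝ := max B2 0 with hB2'def
  set B3' : ℝ := max B3 0 with hB3'def
  set B4' : ℝ := max B4 0 with hB4'def
  have hB2'0 : 0 ≤ B2' := le_max_right _ _
  have hB3'0 : 0 ≤ B3' := le_max_right _ _
  have hB4'0 : 0 ≤ B4' := le_max_right _ _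
  have hB2' : ∀ y ∈ Icc (-1 : ℝ) 1, |iteratedDeriv 2 g y| ≤ B2' :=
    fun y hy => (hB2 y hy).trans (le_max_left _ _)
  have hB3' : ∀ y ∈ Icc (g (-1 : ℝ)) (g 1), |iteratedDeriv 3 u y| ≤ B3' :=
    fun y hy => (hB3 y hy).trans (le_max_left _ _)
  have hB4' : ∀ y ∈ Icc (g (-1 : ℝ)) (g 1), |iteratedDeriv 4 u y| ≤ B4' :=
    fun y hy => (hB4 y hy).trans (le_max_left _ _)
  refine ⟨B4' / 6 + B2' * B3' / (3 * δ ^ 2) + 1, by positivity, ?_⟩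
  set C : ℝ := B4' / 6 + B2' * B3' / (3 * δ ^ 2) + 1 with hCdef
  have main : ∀ k t : ℝ, 0 < k → -1 ≤ t - k → t + k ≤ 1 →
      |iteratedDeriv 2 u (g t) -
        (2 * u (g (t - k)) / ((g t - g (t - k)) * ((g t - g (t - k)) + (g (t + k) - g t))) -
          2 * u (g t) / ((g t - g (t - k)) * (g (t + k) - g t)) +
          2 * u (g (t + k)) / ((g (t + k) - g t) * ((g t - g (t - k)) + (g (t + k) - g t))))| ≤
        C * max (g t - g (t - k)) (g (t + k) - g t) ^ 2 := by
    intro k t hk0 htl htu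
    have ht1 : t - k ∈ Icc (-1 : ℝ) 1 := ⟨htl, by linarith⟩
    have ht2 : t ∈ Icc (-1 : ℝ) 1 := ⟨by linarith, by linarith⟩
    have ht3 : t + k ∈ Icc (-1 : ℝ) 1 := ⟨by linarith, htu⟩
    have hab : g (t - k) < g t := hmono ht1 ht2 (by linarith)
    have hbc : g t < g (t + k) := hmono ht2 ht3 (by linarith)
    set a : ℝ := g (t - k) with hadef
    set b : ℝ := g t with hbdef
    set c : ℝ := g (t + k) with hcdef
    have h1pos : 0 < b - a := by linarith
    have h2pos : 0 < c - b := by linarith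
    set M : ℝ := max (b - a) (c - b) with hMdef
    have hM1 : b - a ≤ M := le_max_left _ _
    have hM2 : c - b ≤ M := le_max_right _ _
    have hM0 : 0 < M := lt_of_lt_of_le h1pos hM1
    -- lower bound on step via MVT
    have hδk : δ * k ≤ b - a := by
      obtain ⟨cc, hcc, hccd⟩ := exists_deriv_eq_slope g (show t - k < t by linarith)
        hgd.continuous.continuousOn hgd.differentiableOn
      have hccI : cc ∈ Icc (-1 : ℝ) 1 := ⟨by linarith [hcc.1], by linarith [hcc.2]⟩
      have := hg' cc hccI
      rw [hccd] at this
      have hks : t - (t - k) = k := by ring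
      rw [hks] at this
      calc δ * k ≤ (b - a) / k * k := by
            apply mul_le_mul_of_nonneg_right this hk0.le
        _ = b - a := by field_simp
    have hk2M : k ^ 2 ≤ M ^ 2 / δ ^ 2 := by
      rw [le_div_iff₀ (by positivity)]
      have hmm := mul_self_le_mul_self (by positivity : (0:ℝ) ≤ δ * k) (hδk.trans hM1)
      nlinarith [hmm]
    -- membership of grid images in [g(-1), g 1]
    have hsub : Ioo a c ⊆ Icc (g (-1 : ℝ)) (g 1) := by
      intro y hy
      constructor
      · have : g (-1 : ℝ) ≤ a := hmono.monotoneOn (left_mem_Icc.2 (by norm_num)) ht1 ht1.1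
        linarith [hy.1]
      · have : c ≤ g 1 := hmono.monotoneOn ht3 (right_mem_Icc.2 (by norm_num)) ht3.2
        linarith [hy.2]
    have hbJ : b ∈ Icc (g (-1 : ℝ)) (g 1) := hsub ⟨hab, hbc⟩
    -- Taylor expansions for u
    obtain ⟨ξ1, hξ1, hua⟩ := taylor4L hu hab
    obtain ⟨ξ2, hξ2, huc⟩ := taylor4R hu hbc
    have hξ1J : ξ1 ∈ Icc (g (-1 : ℝ)) (g 1) := hsub ⟨hξ1.1, hξ1.2.trans hbc⟩
    have hξ2J : ξ2 ∈ Icc (g (-1 : ℝ)) (g 1) := hsub ⟨hab.trans hξ2.1, hξ2.2⟩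
    -- Taylor expansions for g
    obtain ⟨η1, hη1, hga⟩ := taylor2L hg2 (show t - k < t by linarith)
    obtain ⟨η2, hη2, hgc⟩ := taylor2R hg2 (show t < t + k by linarith)
    have hη1I : η1 ∈ Icc (-1 : ℝ) 1 := ⟨by linarith [hη1.1], by linarith [hη1.2]⟩
    have hη2I : η2 ∈ Icc (-1 : ℝ) 1 := ⟨by linarith [hη2.1], by linarith [hη2.2]⟩
    have hks1 : t - (t - k) = k := by ring
    have hks2 : t + k - t = k := by ring
    rw [hks1] at hga
    rw [hks2] at hgc
    have hgdiff : |(b - a) - (c - b)| ≤ B2' * k ^ 2 := by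
      have hdiffeq : (b - a) - (c - b) =
          -(iteratedDeriv 2 g η1 + iteratedDeriv 2 g η2) * k ^ 2 / 2 := by
        rw [hadef, hbdef, hcdef, hga, hgc]
        ring
      rw [hdiffeq]
      have e1 := hB2' η1 hη1I
      have e2 := hB2' η2 hη2I
      rw [abs_div, abs_mul, abs_neg]
      rw [abs_of_pos (by positivity : (0:ℝ) < k ^ 2), abs_of_pos (by norm_num : (0:ℝ) < 2)]
      rw [div_le_iff₀ (by norm_num : (0:ℝ) < 2)]
      have habs : |iteratedDeriv 2 g η1 + iteratedDeriv 2 g η2| ≤ 2 * B2' := by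
        calc |iteratedDeriv 2 g η1 + iteratedDeriv 2 g η2|
            ≤ |iteratedDeriv 2 g η1| + |iteratedDeriv 2 g η2| := abs_add_le _ _
          _ ≤ 2 * B2' := by linarith
      nlinarith [sq_nonneg k, habs, abs_nonneg (iteratedDeriv 2 g η1 + iteratedDeriv 2 g η2)]
    -- key algebraic identity
    have hane : b - a ≠ 0 := ne_of_gt h1pos
    have hbne : c - b ≠ 0 := ne_of_gt h2pos
    have hsne : (b - a) + (c - b) ≠ 0 := ne_of_gt (by linarith)
    set E1 : ℝ := iteratedDeriv 4 u ξ1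
    set E2 : ℝ := iteratedDeriv 4 u ξ2
    set D3 : ℝ := iteratedDeriv 3 u b
    have key : iteratedDeriv 2 u b -
        (2 * u a / ((b - a) * ((b - a) + (c - b))) -
          2 * u b / ((b - a) * (c - b)) +
          2 * u c / ((c - b) * ((b - a) + (c - b)))) =
        ((b - a) - (c - b)) / 3 * D3
          - E1 * (b - a) ^ 3 / (12 * ((b - a) + (c - b)))
          - E2 * (c - b) ^ 3 / (12 * ((b - a) + (c - b))) := by
      have hcane : c - a ≠ 0 := ne_of_gt (by linarith)
      rw [hua, huc]
      field_simp [hane, hbne, hcane]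
      ring
    rw [key]
    clear key hua huc hga hgc
    -- bound the three terms
    have hD3 : |D3| ≤ B3' := hB3' b hbJ
    have hE1 : |E1| ≤ B4' := hB4' ξ1 hξ1J
    have hE2 : |E2| ≤ B4' := hB4' ξ2 hξ2J
    have T1 : |((b - a) - (c - b)) / 3 * D3| ≤ B2' * B3' / (3 * δ ^ 2) * M ^ 2 := by
      rw [abs_mul, abs_div, abs_of_pos (by norm_num : (0:ℝ) < 3)]
      rw [div_mul_eq_mul_div, div_le_iff₀ (by norm_num : (0:ℝ) < 3)]
      have step1 : |(b - a) - (c - b)| * |D3| ≤ (B2' * k ^ 2) * B3' :=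
        mul_le_mul hgdiff hD3 (abs_nonneg _) (by positivity)
      have step2 : (B2' * k ^ 2) * B3' ≤ B2' * (M ^ 2 / δ ^ 2) * B3' := by
        apply mul_le_mul_of_nonneg_right _ hB3'0
        exact mul_le_mul_of_nonneg_left hk2M hB2'0
      have : B2' * (M ^ 2 / δ ^ 2) * B3' = B2' * B3' / (3 * δ ^ 2) * M ^ 2 * 3 := by
        field_simp
      linarith
    have hsq1 : (b - a) ^ 2 ≤ M ^ 2 := pow_le_pow_left₀ h1pos.le hM1 2
    have hsq2 : (c - b) ^ 2 ≤ M ^ 2 := pow_le_pow_left₀ h2pos.le hM2 2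
    have hcube1 : (b - a) ^ 3 ≤ M ^ 2 * ((b - a) + (c - b)) := by
      calc (b - a) ^ 3 = (b - a) ^ 2 * (b - a) := by ring
        _ ≤ M ^ 2 * (b - a) := mul_le_mul_of_nonneg_right hsq1 h1pos.le
        _ ≤ M ^ 2 * ((b - a) + (c - b)) :=
            mul_le_mul_of_nonneg_left (by linarith) (sq_nonneg M)
    have hcube2 : (c - b) ^ 3 ≤ M ^ 2 * ((b - a) + (c - b)) := by
      calc (c - b) ^ 3 = (c - b) ^ 2 * (c - b) := by ring
        _ ≤ M ^ 2 * (c - b) := mul_le_mul_of_nonneg_right hsq2 h2pos.le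
        _ ≤ M ^ 2 * ((b - a) + (c - b)) :=
            mul_le_mul_of_nonneg_left (by linarith) (sq_nonneg M)
    have T2 : |E1 * (b - a) ^ 3 / (12 * ((b - a) + (c - b)))| ≤ B4' * M ^ 2 / 12 := by
      have hS12 : (0:ℝ) < 12 * ((b - a) + (c - b)) :=
        mul_pos (by norm_num) (by linarith)
      rw [abs_div, abs_mul]
      rw [abs_of_pos hS12, abs_of_pos (pow_pos h1pos 3)]
      rw [div_le_iff₀ hS12]
      have : |E1| * (b - a) ^ 3 ≤ B4' * (M ^ 2 * ((b - a) + (c - b))) :=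
        mul_le_mul hE1 hcube1 (pow_pos h1pos 3).le hB4'0
      linarith [this]
    have T3 : |E2 * (c - b) ^ 3 / (12 * ((b - a) + (c - b)))| ≤ B4' * M ^ 2 / 12 := by
      have hS12 : (0:ℝ) < 12 * ((b - a) + (c - b)) :=
        mul_pos (by norm_num) (by linarith)
      rw [abs_div, abs_mul]
      rw [abs_of_pos hS12, abs_of_pos (pow_pos h2pos 3)]
      rw [div_le_iff₀ hS12]
      have : |E2| * (c - b) ^ 3 ≤ B4' * (M ^ 2 * ((b - a) + (c - b))) :=
        mul_le_mul hE2 hcube2 (pow_pos h2pos 3).le hB4'0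
      linarith [this]
    have tri : |((b - a) - (c - b)) / 3 * D3
          - E1 * (b - a) ^ 3 / (12 * ((b - a) + (c - b)))
          - E2 * (c - b) ^ 3 / (12 * ((b - a) + (c - b)))| ≤
        |((b - a) - (c - b)) / 3 * D3|
          + |E1 * (b - a) ^ 3 / (12 * ((b - a) + (c - b)))|
          + |E2 * (c - b) ^ 3 / (12 * ((b - a) + (c - b)))| := by
      calc _ ≤ |((b - a) - (c - b)) / 3 * D3
            - E1 * (b - a) ^ 3 / (12 * ((b - a) + (c - b)))|
          + |E2 * (c - b) ^ 3 / (12 * ((b - a) + (c - b)))| := by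
            rw [sub_eq_add_neg (((b - a) - (c - b)) / 3 * D3 - _)]
            exact (abs_add_le _ _).trans (by rw [abs_neg])
        _ ≤ _ := by
            have := (abs_add_le (((b - a) - (c - b)) / 3 * D3)
              (-(E1 * (b - a) ^ 3 / (12 * ((b - a) + (c - b)))))).trans_eq
              (by rw [abs_neg])
            rw [← sub_eq_add_neg] at this
            linarith
    have hMsq : 0 ≤ M ^ 2 := sq_nonneg M
    calc _ ≤ _ := tri
      _ ≤ B2' * B3' / (3 * δ ^ 2) * M ^ 2 + B4' * M ^ 2 / 12 + B4' * M ^ 2 / 12 := by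
            linarith
      _ ≤ C * M ^ 2 := by rw [hCdef]; nlinarith [hMsq]
  -- apply `main` to the grid
  intro N i hi1 hiN
  dsimp only
  set k : ℝ := 2 / ((N : ℝ) + 1) with hkdef
  have hN0 : (0 : ℝ) < (N : ℝ) + 1 := by positivity
  have hk0 : 0 < k := by positivity
  have hi1' : (1 : ℝ) ≤ (i : ℝ) := by exact_mod_cast hi1
  have hiN' : (i : ℝ) ≤ (N : ℝ) := by exact_mod_cast hiN
  have hidx : i - 1 + 1 = i := Nat.succ_pred_eq_of_pos hi1
  rw [hidx]
  rw [show (-1 : ℝ) + (↑(i - 1) : ℝ) * k = (-1 + (i : ℝ) * k) - k by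
      rw [Nat.cast_sub hi1]; push_cast; ring,
    show (-1 : ℝ) + (↑(i + 1) : ℝ) * k = (-1 + (i : ℝ) * k) + k by push_cast; ring]
  apply main k (-1 + (i : ℝ) * k) hk0
  · nlinarith [hk0]
  · have : ((i : ℝ) + 1) * k ≤ ((N : ℝ) + 1) * k := by
      apply mul_le_mul_of_nonneg_right _ hk0.le
      linarith
    have hNk : ((N : ℝ) + 1) * k = 2 := by
      rw [hkdef]; field_simp
    nlinarith
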